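/- Let D be a real m×k matrix with DᵀD invertible, and let q ∈ ℝ^k with qᵢ ≥ 0 for all i. Let X₁, …, Xₙ : Ω → ℝ^m be independent, identically distributed square-integrable random vectors on a probability space with mean E[X₁] = D·q and E‖X₁ − Dq‖₂² = σ². Define the estimator q̂ₙ = max((DᵀD)⁻¹·Dᵀ·X̄ₙ, 0) (componentwise maximum with 0), where X̄ₙ = (1/n)·∑_{i=1}^n Xᵢ. Then the statistical risk satisfies E‖q̂ₙ − q‖₂² ≤ ‖(DᵀD)⁻¹Dᵀ‖²_{op}·σ²/n; in particular the risk is of order O(1/n) in the number of observed days n. -/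

import Mathlib

open MeasureTheory ProbabilityTheory Matrix
open scoped ENNReal

private lemma euclid_norm_sq {ι : Type*} [Fintype ι] (x : EuclideanSpace ℝ ι) :
    ‖x‖ ^ 2 = ∑ i, (x i) ^ 2 := by
  rw [EuclideanSpace.norm_eq, Real.sq_sqrt (by positivity)]
  simp [sq_abs]

private lemma max_sub_sq_le (a b : ℝ) (hb : 0 ≤ b) : (max a 0 - b) ^ 2 ≤ (a - b) ^ 2 := by
  rcases le_total 0 a with h | h
  · simp [max_eq_left h]
  · rw [max_eq_right h]; nlinarith

private lemma pi_sub_key {k m : ℕ} (A : Matrix (Fin k) (Fin m) ℝ) (D : Matrix (Fin m) (Fin k) ℝ)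
    (hAD : A * D = 1) (w : Fin m → ℝ) (q : Fin k → ℝ) :
    A *ᵥ w - q = A *ᵥ (w - D *ᵥ q) := by
  rw [Matrix.mulVec_sub, Matrix.mulVec_mulVec, hAD, Matrix.one_mulVec]

private lemma integrable_mul_l2 {Ω : Type*} [MeasurableSpace Ω] {P : Measure Ω}
    {f g : Ω → ℝ} (hf : MeasureTheory.MemLp f 2 P) (hg : MeasureTheory.MemLp g 2 P) :
    Integrable (fun ω => f ω * g ω) P := by
  rw [← memLp_one_iff_integrable]
  exact hg.smul hf (hpqr := ⟨by rw [inv_one]; exact ENNReal.inv_two_add_inv_two⟩)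

/-- O(1/n) risk bound for the truncated pseudoinverse estimator of the O-D demand mean:
if `X₁, …, Xₙ` are i.i.d. square-integrable random vectors with mean `D·q` (`q ≥ 0`
componentwise, `DᵀD` invertible) and `E‖X₁ − Dq‖₂² = σ²`, then the estimator
`q̂ₙ = max((DᵀD)⁻¹·Dᵀ·X̄ₙ, 0)` satisfies `E‖q̂ₙ − q‖₂² ≤ ‖(DᵀD)⁻¹Dᵀ‖_op²·σ²/n`. -/
theorem truncated_pseudoinverse_risk_bound
    {Ω : Type*} [MeasurableSpace Ω] (P : Measure Ω) [IsProbabilityMeasure P]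
    (m k n : ℕ) (hn : 1 ≤ n)
    (D : Matrix (Fin m) (Fin k) ℝ) (hD : IsUnit (Dᵀ * D))
    (q : EuclideanSpace ℝ (Fin k)) (hq : ∀ i, 0 ≤ q i)
    (X : Fin n → Ω → EuclideanSpace ℝ (Fin m))
    (hmeas : ∀ i, Measurable (X i))
    (hindep : iIndepFun X P)
    (hident : ∀ i j, IdentDistrib (X i) (X j) P P)
    (hL2 : ∀ i, MemLp (X i) 2 P)
    (hmean : ∀ i, ∫ ω, X i ω ∂P = (show EuclideanSpace ℝ (Fin m) from WithLp.toLp 2 (D *ᵥ q)))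
    (σ2 : ℝ)
    (hσ : ∀ i, ∫ ω, ‖X i ω - (show EuclideanSpace ℝ (Fin m) from WithLp.toLp 2 (D *ᵥ q))‖ ^ 2 ∂P = σ2) :
    ∫ ω, ‖(show EuclideanSpace ℝ (Fin k) from
            WithLp.toLp 2 (fun j => max (((Dᵀ * D)⁻¹ *ᵥ (Dᵀ *ᵥ ((n : ℝ)⁻¹ • ∑ i, X i ω))) j) 0)) - q‖ ^ 2 ∂P
      ≤ ‖LinearMap.toContinuousLinearMap (Matrix.toEuclideanLin ((Dᵀ * D)⁻¹ * Dᵀ))‖ ^ 2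
          * σ2 / n := by
  classical
  have hn0 : (n : ℝ) ≠ 0 := Nat.cast_ne_zero.mpr (by omega)
  set μv : EuclideanSpace ℝ (Fin m) := (show EuclideanSpace ℝ (Fin m) from WithLp.toLp 2 (D *ᵥ q)) with hμv
  set A : Matrix (Fin k) (Fin m) ℝ := (Dᵀ * D)⁻¹ * Dᵀ with hA
  set T : EuclideanSpace ℝ (Fin m) →L[ℝ] EuclideanSpace ℝ (Fin k) :=
    LinearMap.toContinuousLinearMap (Matrix.toEuclideanLin A) with hT
  have hAD : A * D = 1 := by
    rw [hA, Matrix.mul_assoc, Matrix.nonsing_inv_mul _ ((Matrix.isUnit_iff_isUnit_det _).mp hD)]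
  set Y : Fin n → Ω → EuclideanSpace ℝ (Fin m) := fun i ω => X i ω - μv with hYdef
  set Z : Ω → EuclideanSpace ℝ (Fin m) :=
    fun ω => ((n : ℝ)⁻¹ • ∑ i, X i ω) - μv with hZdef
  have hYL2 : ∀ i, MemLp (Y i) 2 P := fun i => (hL2 i).sub (memLp_const μv)
  have hZL2 : MemLp Z 2 P := by
    have hs : MemLp (fun ω => ∑ i, X i ω) 2 P :=
      memLp_finset_sum _ (fun i _ => hL2 i)
    exact (hs.const_smul ((n : ℝ)⁻¹)).sub (memLp_const μv)
  have hZnormsq : Integrable (fun ω => ‖Z ω‖ ^ 2) P := hZL2.norm.integrable_sq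
  -- coordinate facts
  have hgL2 : ∀ i c, MemLp (fun ω => Y i ω c) 2 P := fun i c =>
    (EuclideanSpace.proj c (𝕜 := ℝ)).comp_memLp' (hYL2 i)
  have hYint : ∀ i, Integrable (Y i) P := fun i =>
    ((hL2 i).integrable one_le_two).sub (integrable_const μv)
  have hYmean : ∀ i, ∫ ω, Y i ω ∂P = 0 := by
    intro i
    rw [hYdef]
    rw [integral_sub ((hL2 i).integrable one_le_two) (integrable_const μv), hmean i,
      integral_const]
    simp
  have hg0 : ∀ i c, ∫ ω, Y i ω c ∂P = 0 := by
    intro i c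
    have h := (EuclideanSpace.proj c (𝕜 := ℝ)).integral_comp_comm (hYint i)
    simpa [hYmean i] using h
  have hcross : ∀ (c : Fin m) (i j : Fin n), i ≠ j → ∫ ω, Y i ω c * Y j ω c ∂P = 0 := by
    intro c i j hij
    have hφ : Measurable (fun v : EuclideanSpace ℝ (Fin m) => v c - μv c) :=
      ((EuclideanSpace.proj c (𝕜 := ℝ)).continuous.measurable).sub measurable_const
    have hInd : IndepFun (fun ω => Y i ω c) (fun ω => Y j ω c) P :=
      (hindep.indepFun hij).comp hφ hφ
    have h := hInd.integral_mul_eq_mul_integral (hgL2 i c).aestronglyMeasurable (hgL2 j c).aestronglyMeasurable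
    simpa [Pi.mul_apply, hg0] using h
  have hZcoord : ∀ ω c, Z ω c = (n : ℝ)⁻¹ * ∑ i, Y i ω c := by
    intro ω c
    have h1 : Z ω c = (n : ℝ)⁻¹ * (∑ i, X i ω c) - μv c := by
      rw [hZdef]
      show ((n : ℝ)⁻¹ • ∑ i, X i ω) c - μv c = _
      rw [show ((n : ℝ)⁻¹ • ∑ i, X i ω) c = (n : ℝ)⁻¹ * (∑ i, X i ω) c from rfl,
        WithLp.ofLp_sum, Finset.sum_apply c Finset.univ fun i => (X i ω).ofLp]
    have h2 : ∑ i, Y i ω c = (∑ i, X i ω c) - n * μv c := by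
      have he : ∀ i : Fin n, Y i ω c = X i ω c - μv c := fun i => rfl
      simp_rw [he]
      rw [Finset.sum_sub_distrib, Finset.sum_const, Finset.card_univ, Fintype.card_fin,
        nsmul_eq_mul]
    rw [h1, h2, mul_sub]
    congr 1
    rw [← mul_assoc, inv_mul_cancel₀ hn0, one_mul]
  have hsumL2 : ∀ c, MemLp (fun ω => ∑ i, Y i ω c) 2 P := fun c =>
    memLp_finset_sum _ (fun i _ => hgL2 i c)
  -- the variance computation
  have hint : ∫ ω, ‖Z ω‖ ^ 2 ∂P = σ2 / n := by
    have step1 : ∫ ω, ‖Z ω‖ ^ 2 ∂P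
        = (n : ℝ)⁻¹ ^ 2 * ∑ c, ∫ ω, (∑ i, Y i ω c) ^ 2 ∂P := by
      rw [← integral_finset_sum _ (fun c _ => (hsumL2 c).integrable_sq), ← integral_const_mul]
      refine integral_congr_ae (Filter.Eventually.of_forall fun ω => ?_)
      show ‖Z ω‖ ^ 2 = (n : ℝ)⁻¹ ^ 2 * ∑ c, (∑ i, Y i ω c) ^ 2
      rw [euclid_norm_sq, Finset.mul_sum]
      refine Finset.sum_congr rfl fun c _ => ?_
      rw [hZcoord ω c, mul_pow]
    have step2 : ∀ c, ∫ ω, (∑ i, Y i ω c) ^ 2 ∂P = ∑ i, ∫ ω, (Y i ω c) ^ 2 ∂P := by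
      intro c
      have expand : ∀ ω, (∑ i, Y i ω c) ^ 2 = ∑ i, ∑ j, Y i ω c * Y j ω c := by
        intro ω; rw [sq, Finset.sum_mul_sum]
      calc ∫ ω, (∑ i, Y i ω c) ^ 2 ∂P
          = ∫ ω, ∑ i, ∑ j, Y i ω c * Y j ω c ∂P :=
            integral_congr_ae (Filter.Eventually.of_forall fun ω => expand ω)
        _ = ∑ i, ∑ j, ∫ ω, Y i ω c * Y j ω c ∂P := by
            rw [integral_finset_sum _ (fun i _ =>
              integrable_finset_sum _ (fun j _ => integrable_mul_l2 (hgL2 i c) (hgL2 j c)))]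
            exact Finset.sum_congr rfl fun i _ =>
              integral_finset_sum _ (fun j _ => integrable_mul_l2 (hgL2 i c) (hgL2 j c))
        _ = ∑ i, ∫ ω, (Y i ω c) ^ 2 ∂P := by
            refine Finset.sum_congr rfl fun i _ => ?_
            rw [Finset.sum_eq_single i (fun j _ hji => hcross c i j (Ne.symm hji))
              (fun h => absurd (Finset.mem_univ i) h)]
            simp_rw [← sq]
    have step3 : ∀ i, ∫ ω, ∑ c, (Y i ω c) ^ 2 ∂P = σ2 := by
      intro i
      have : ∀ ω, ∑ c, (Y i ω c) ^ 2 = ‖X i ω - μv‖ ^ 2 := by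
        intro ω
        rw [show ‖X i ω - μv‖ = ‖Y i ω‖ from rfl, euclid_norm_sq]
      calc ∫ ω, ∑ c, (Y i ω c) ^ 2 ∂P
          = ∫ ω, ‖X i ω - μv‖ ^ 2 ∂P :=
            integral_congr_ae (Filter.Eventually.of_forall fun ω => this ω)
        _ = σ2 := hσ i
    calc ∫ ω, ‖Z ω‖ ^ 2 ∂P
        = (n : ℝ)⁻¹ ^ 2 * ∑ c, ∑ i, ∫ ω, (Y i ω c) ^ 2 ∂P := by
          rw [step1]; exact congrArg _ (Finset.sum_congr rfl fun c _ => step2 c)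
      _ = (n : ℝ)⁻¹ ^ 2 * ∑ i, ∑ c, ∫ ω, (Y i ω c) ^ 2 ∂P := by rw [Finset.sum_comm]
      _ = (n : ℝ)⁻¹ ^ 2 * ∑ i : Fin n, σ2 := by
          congr 1
          refine Finset.sum_congr rfl fun i _ => ?_
          rw [← integral_finset_sum _ (fun c _ => (hgL2 i c).integrable_sq)]
          exact step3 i
      _ = σ2 / n := by
          rw [Finset.sum_const, Finset.card_univ, Fintype.card_fin]
          field_simp
          ring
  -- pointwise bound
  have key : ∀ ω, ‖(show EuclideanSpace ℝ (Fin k) from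
        WithLp.toLp 2 (fun j => max (((Dᵀ * D)⁻¹ *ᵥ (Dᵀ *ᵥ ((n : ℝ)⁻¹ • ∑ i, X i ω))) j) 0)) - q‖ ^ 2
      ≤ ‖T‖ ^ 2 * ‖Z ω‖ ^ 2 := by
    intro ω
    set v : EuclideanSpace ℝ (Fin k) :=
      (show EuclideanSpace ℝ (Fin k) from WithLp.toLp 2 (A *ᵥ ((n : ℝ)⁻¹ • ∑ i, X i ω))) with hv
    have hvv : ((Dᵀ * D)⁻¹ *ᵥ (Dᵀ *ᵥ ((n : ℝ)⁻¹ • ∑ i, X i ω))) = (v : Fin k → ℝ) := by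
      rw [hv, hA]; exact Matrix.mulVec_mulVec _ _ _
    have h1 : ‖(show EuclideanSpace ℝ (Fin k) from WithLp.toLp 2 (fun j => max (v j) 0)) - q‖ ^ 2
        ≤ ‖v - q‖ ^ 2 := by
      rw [euclid_norm_sq, euclid_norm_sq]
      refine Finset.sum_le_sum fun j _ => ?_
      rw [show ((show EuclideanSpace ℝ (Fin k) from WithLp.toLp 2 (fun j => max (v j) 0)) - q) j
          = max (v j) 0 - q j from rfl,
        show (v - q) j = v j - q j from rfl]
      exact max_sub_sq_le _ _ (hq j)
    have h2 : v - q = T (Z ω) := by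
      exact WithLp.ofLp_injective 2 <| pi_sub_key A D hAD (fun c => ((n : ℝ)⁻¹ • ∑ i, X i ω : EuclideanSpace ℝ (Fin m)) c)
        (fun j => q j)
    calc ‖(show EuclideanSpace ℝ (Fin k) from
            WithLp.toLp 2 (fun j => max (((Dᵀ * D)⁻¹ *ᵥ (Dᵀ *ᵥ ((n : ℝ)⁻¹ • ∑ i, X i ω))) j) 0)) - q‖ ^ 2
        = ‖(show EuclideanSpace ℝ (Fin k) from WithLp.toLp 2 (fun j => max (v j) 0)) - q‖ ^ 2 := by rw [hvv]
      _ ≤ ‖v - q‖ ^ 2 := h1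
      _ = ‖T (Z ω)‖ ^ 2 := by rw [h2]
      _ ≤ (‖T‖ * ‖Z ω‖) ^ 2 := by
          have := T.le_opNorm (Z ω)
          exact pow_le_pow_left₀ (norm_nonneg _) this 2
      _ = ‖T‖ ^ 2 * ‖Z ω‖ ^ 2 := mul_pow _ _ _
  calc ∫ ω, ‖(show EuclideanSpace ℝ (Fin k) from
            WithLp.toLp 2 (fun j => max (((Dᵀ * D)⁻¹ *ᵥ (Dᵀ *ᵥ ((n : ℝ)⁻¹ • ∑ i, X i ω))) j) 0)) - q‖ ^ 2 ∂P
      ≤ ∫ ω, ‖T‖ ^ 2 * ‖Z ω‖ ^ 2 ∂P := by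
        refine integral_mono_of_nonneg (Filter.Eventually.of_forall fun ω => by positivity)
          (hZnormsq.const_mul _) (Filter.Eventually.of_forall fun ω => key ω)
    _ = ‖T‖ ^ 2 * (σ2 / n) := by rw [integral_const_mul, hint]
    _ = ‖T‖ ^ 2 * σ2 / n := by ring
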